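/- arXiv:1710.01516 — 2 statements merged into one kernel-verified Lean document; each statement's English description precedes it below -/
import Mathlib

section
/- Let e ∈ E(T) and v ∈ U_e with S(e, v) ≠ ∅. Every v-best cut edge for e is a v-best swap edge for e; that is, if f ∈ S(e, v) minimizes φ_e(f) = max_{g ∈ S(e)} φ(f, g) among all edges of S(e, v), then f minimizes σ_{G−e}(T_{e/f}) among all edges of S(e, v). -/
open SimpleGraph

variable {V : Type*} [Fintype V] [DecidableEq V]

/-- Total weight of a walk: the sum of the weights of its edges. -/
def pathWeight (w : Sym2 V → ℝ) {G : SimpleGraph V} {x y : V} (p : G.Walk x y) : ℝ :=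
  (p.edges.map w).sum

/-- Weighted shortest-path distance in `G` between `x` and `y`
(infimum of the weights of all paths from `x` to `y`);
in a tree this is the weight of the unique path. -/
noncomputable def wDist (G : SimpleGraph V) (w : Sym2 V → ℝ) (x y : V) : ℝ :=
  sInf {r | ∃ p : G.Walk x y, p.IsPath ∧ r = pathWeight w p}

/-- `G` is 2-edge-connected: connected, and still connected after deleting any edge. -/
def TwoEdgeConnected (G : SimpleGraph V) : Prop :=
  G.Connected ∧ ∀ e ∈ G.edgeSet, (G.deleteEdges {e}).Connected

/-- `U_e`: vertices of the component of `T - e` containing the root. -/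
def Ue (T : SimpleGraph V) (root : V) (e : Sym2 V) : Set V :=
  {v | (T.deleteEdges {e}).Reachable root v}

/-- `D_e`: vertices of the component of `T - e` not containing the root. -/
def De (T : SimpleGraph V) (root : V) (e : Sym2 V) : Set V :=
  {v | ¬ (T.deleteEdges {e}).Reachable root v}

/-- `VSwap G T root e v u` says that `(v, u)`, with `v ∈ U_e` and `u ∈ D_e`,
is (the canonically oriented representation of) a swap edge for `e`:
an edge of `G`, different from `e`, whose endpoints lie in the two
different components of `T - e`. -/
def VSwap (G T : SimpleGraph V) (root : V) (e : Sym2 V) (v u : V) : Prop :=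
  G.Adj v u ∧ s(v, u) ≠ e ∧ v ∈ Ue T root e ∧ u ∈ De T root e

/-- `φ(f, g)` for the swap edge `f = (v, u)` (with `v ∈ U_e`, `u ∈ D_e`) and the swap
edge `g = (x, y)` (with `x ∈ U_e`, `y ∈ D_e`):
`(d_T(x, v) + w(f) + d_T(u, y)) / w(g)`. -/
noncomputable def phi (T : SimpleGraph V) (w : Sym2 V → ℝ) (v u x y : V) : ℝ :=
  (wDist T w x v + w (s(v, u)) + wDist T w u y) / w (s(x, y))

/-- `φ_e(f) = max_{g ∈ S(e)} φ(f, g)` for the swap edge `f = (v, u)`. -/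
noncomputable def phiMax (G T : SimpleGraph V) (w : Sym2 V → ℝ) (root : V) (e : Sym2 V)
    (v u : V) : ℝ :=
  sSup {r | ∃ x y, VSwap G T root e x y ∧ r = phi T w v u x y}

/-- The swap tree `T_{e/f}`: delete `e` from `T` and insert `f`. -/
def swapTree (T : SimpleGraph V) (e f : Sym2 V) : SimpleGraph V :=
  fromEdgeSet ((T.edgeSet \ {e}) ∪ {f})

/-- The stretch factor `σ_H(T')` of `T'` w.r.t. `H`:
the maximum over pairs of distinct vertices of `d_{T'}(x,y) / d_H(x,y)`. -/
noncomputable def stretch (H T' : SimpleGraph V) (w : Sym2 V → ℝ) : ℝ :=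
  sSup {r | ∃ x y : V, x ≠ y ∧ r = wDist T' w x y / wDist H w x y}

set_option linter.unusedSectionVars false

section PW
variable {w : Sym2 V → ℝ} {H : SimpleGraph V}

@[simp] lemma pathWeight_nil {x : V} : pathWeight w (Walk.nil : H.Walk x x) = 0 := by
  simp [pathWeight]

lemma pathWeight_cons {x y z : V} (h : H.Adj x y) (p : H.Walk y z) :
    pathWeight w (Walk.cons h p) = w s(x, y) + pathWeight w p := by
  simp [pathWeight]

lemma pathWeight_append {x y z : V} (p : H.Walk x y) (q : H.Walk y z) :
    pathWeight w (p.append q) = pathWeight w p + pathWeight w q := by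
  simp [pathWeight, Walk.edges_append]

lemma pathWeight_reverse {x y : V} (p : H.Walk x y) :
    pathWeight w p.reverse = pathWeight w p := by
  simp [pathWeight, Walk.edges_reverse, List.sum_reverse]

lemma pathWeight_transfer {H' : SimpleGraph V} {x y : V} (p : H.Walk x y) (hp) :
    pathWeight w (p.transfer H' hp) = pathWeight w p := by
  simp [pathWeight, Walk.edges_transfer]

lemma pathWeight_nonneg (hw0 : ∀ a ∈ H.edgeSet, 0 ≤ w a) {x y : V} (p : H.Walk x y) :
    0 ≤ pathWeight w p := by
  apply List.sum_nonneg
  intro r hr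
  obtain ⟨a, ha, rfl⟩ := List.mem_map.mp hr
  exact hw0 a (p.edges_subset_edgeSet ha)

lemma wDistSet_bddBelow (hw0 : ∀ a ∈ H.edgeSet, 0 ≤ w a) (x y : V) :
    BddBelow {r | ∃ p : H.Walk x y, p.IsPath ∧ r = pathWeight w p} := by
  refine ⟨0, ?_⟩
  rintro r ⟨p, hp, rfl⟩
  exact pathWeight_nonneg hw0 p

lemma wDist_nonneg (hw0 : ∀ a ∈ H.edgeSet, 0 ≤ w a) (x y : V) : 0 ≤ wDist H w x y := by
  apply Real.sInf_nonneg
  rintro r ⟨p, hp, rfl⟩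
  exact pathWeight_nonneg hw0 p

lemma wDist_le_pathWeight_isPath (hw0 : ∀ a ∈ H.edgeSet, 0 ≤ w a) {x y : V}
    (p : H.Walk x y) (hp : p.IsPath) : wDist H w x y ≤ pathWeight w p :=
  csInf_le (wDistSet_bddBelow hw0 x y) ⟨p, hp, rfl⟩

lemma pathWeight_dropUntil_le (hw0 : ∀ a ∈ H.edgeSet, 0 ≤ w a) {x y z : V}
    (p : H.Walk x y) (hz : z ∈ p.support) :
    pathWeight w (p.dropUntil z hz) ≤ pathWeight w p := by
  conv_rhs => rw [← p.take_spec hz]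
  rw [pathWeight_append]
  have := pathWeight_nonneg hw0 (p.takeUntil z hz)
  linarith

lemma pathWeight_bypass_le (hw0 : ∀ a ∈ H.edgeSet, 0 ≤ w a) {x y : V} (p : H.Walk x y) :
    pathWeight w p.bypass ≤ pathWeight w p := by
  induction p with
  | nil => simp [Walk.bypass]
  | cons h p ih =>
    simp only [Walk.bypass]
    split_ifs with hs
    · have h1 := pathWeight_dropUntil_le hw0 _ hs
      have h2 : 0 ≤ w s(_, _) := hw0 _ (H.mem_edgeSet.mpr h)
      rw [pathWeight_cons]
      linarith
    · rw [pathWeight_cons, pathWeight_cons]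
      linarith

lemma wDist_le_pathWeight (hw0 : ∀ a ∈ H.edgeSet, 0 ≤ w a) {x y : V} (p : H.Walk x y) :
    wDist H w x y ≤ pathWeight w p :=
  (wDist_le_pathWeight_isPath hw0 p.bypass p.bypass_isPath).trans (pathWeight_bypass_le hw0 p)

lemma wDistSet_finite (x y : V) :
    {r | ∃ p : H.Walk x y, p.IsPath ∧ r = pathWeight w p}.Finite := by
  classical
  letI : DecidableRel H.Adj := Classical.decRel _
  have : {r | ∃ p : H.Walk x y, p.IsPath ∧ r = pathWeight w p}
      = Set.range (fun p : H.Path x y => pathWeight w (p : H.Walk x y)) := by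
    ext r
    constructor
    · rintro ⟨p, hp, rfl⟩; exact ⟨⟨p, hp⟩, rfl⟩
    · rintro ⟨⟨p, hp⟩, rfl⟩; exact ⟨p, hp, rfl⟩
  rw [this]
  exact Set.finite_range _

lemma exists_min_path {x y : V} (hr : H.Reachable x y) :
    ∃ p : H.Walk x y, p.IsPath ∧ pathWeight w p = wDist H w x y := by
  have hne : {r | ∃ p : H.Walk x y, p.IsPath ∧ r = pathWeight w p}.Nonempty := by
    obtain ⟨q⟩ := hr
    exact ⟨_, ⟨q.bypass, q.bypass_isPath, rfl⟩⟩
  obtain ⟨p, hp, hpe⟩ := hne.csInf_mem (wDistSet_finite x y)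
  exact ⟨p, hp, hpe.symm⟩

lemma wDist_symm (x y : V) : wDist H w x y = wDist H w y x := by
  unfold wDist
  congr 1
  ext r
  constructor <;>
  · rintro ⟨p, hp, rfl⟩
    exact ⟨p.reverse, hp.reverse, (pathWeight_reverse p).symm⟩

lemma wDist_triangle (hw0 : ∀ a ∈ H.edgeSet, 0 ≤ w a) {x y z : V}
    (hxy : H.Reachable x y) (hyz : H.Reachable y z) :
    wDist H w x z ≤ wDist H w x y + wDist H w y z := by
  obtain ⟨p, hp, hpw⟩ := exists_min_path hxy
  obtain ⟨q, hq, hqw⟩ := exists_min_path hyz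
  calc wDist H w x z ≤ pathWeight w (p.append q) := wDist_le_pathWeight hw0 _
  _ = _ := by rw [pathWeight_append, hpw, hqw]

lemma wDist_pos (hpos : ∀ a ∈ H.edgeSet, 0 < w a) {x y : V}
    (hr : H.Reachable x y) (hne : x ≠ y) : 0 < wDist H w x y := by
  have hw0 : ∀ a ∈ H.edgeSet, 0 ≤ w a := fun a ha => (hpos a ha).le
  obtain ⟨p, hp, hpw⟩ := exists_min_path hr
  rw [← hpw]
  cases p with
  | nil => exact absurd rfl hne
  | cons h q =>
    rw [pathWeight_cons]
    have h1 := hpos _ (H.mem_edgeSet.mpr h)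
    have h2 := pathWeight_nonneg hw0 q
    linarith

lemma wDist_le_weight (hw0 : ∀ a ∈ H.edgeSet, 0 ≤ w a) {x y : V} (h : H.Adj x y) :
    wDist H w x y ≤ w s(x, y) := by
  have hp : (Walk.cons h Walk.nil).IsPath := by
    simp [Walk.isPath_def, h.ne]
  have := wDist_le_pathWeight_isPath hw0 _ hp
  simpa [pathWeight] using this

lemma wDist_self_nonpos (hw0 : ∀ a ∈ H.edgeSet, 0 ≤ w a) (x : V) : wDist H w x x ≤ 0 := by
  have : (Walk.nil : H.Walk x x).IsPath := by simp
  simpa using wDist_le_pathWeight_isPath hw0 _ this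

lemma wDist_eq_of_isTree (hT : H.IsTree) {x y : V} (p : H.Walk x y) (hp : p.IsPath) :
    wDist H w x y = pathWeight w p := by
  have huniq := hT.existsUnique_path x y
  have : {r | ∃ q : H.Walk x y, q.IsPath ∧ r = pathWeight w q} = {pathWeight w p} := by
    ext r
    constructor
    · rintro ⟨q, hq, rfl⟩
      have : q = p := (huniq.unique hq hp)
      simp [this]
    · rintro rfl
      exact ⟨p, hp, rfl⟩
  unfold wDist
  rw [this, csInf_singleton]

end PW

section Graphs
variable {w : Sym2 V → ℝ} {G T : SimpleGraph V} {root : V} {e : Sym2 V}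

lemma mem_Ue_or_De (T : SimpleGraph V) (root : V) (e : Sym2 V) (x : V) :
    x ∈ Ue T root e ∨ x ∈ De T root e := by
  by_cases h : (T.deleteEdges {e}).Reachable root x
  · exact Or.inl h
  · exact Or.inr h

lemma not_mem_Ue_and_De {x : V} (h1 : x ∈ Ue T root e) (h2 : x ∈ De T root e) : False := h2 h1

lemma Ue_reach {x y : V} (hx : x ∈ Ue T root e) (hy : y ∈ Ue T root e) :
    (T.deleteEdges {e}).Reachable x y := (Reachable.symm hx).trans hy

/-- walk decomposition relative to a possibly-used edge `s(a,b)` -/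
lemma reach_decomp {a b x y : V} (p : T.Walk x y) :
    (T.deleteEdges {s(a, b)}).Reachable x y
    ∨ ((T.deleteEdges {s(a, b)}).Reachable x a ∧ (T.deleteEdges {s(a, b)}).Reachable b y)
    ∨ ((T.deleteEdges {s(a, b)}).Reachable x b ∧ (T.deleteEdges {s(a, b)}).Reachable a y) := by
  induction p with
  | nil => exact Or.inl (Reachable.refl _)
  | @cons x z y h p ih =>
    by_cases hef : s(x, z) = s(a, b)
    · rw [Sym2.eq_iff] at hef
      rcases hef with ⟨rfl, rfl⟩ | ⟨rfl, rfl⟩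
      · -- x = a, z = b
        rcases ih with h1 | ⟨h1, h2⟩ | ⟨h1, h2⟩
        · exact Or.inr (Or.inl ⟨Reachable.refl _, h1⟩)
        · exact Or.inr (Or.inl ⟨Reachable.refl _, h2⟩)
        · exact Or.inl (h2.trans (Reachable.refl _) |>.symm.symm |> fun hh => hh)
      · -- x = b, z = a
        rcases ih with h1 | ⟨h1, h2⟩ | ⟨h1, h2⟩
        · exact Or.inr (Or.inr ⟨Reachable.refl _, h1⟩)
        · exact Or.inl h2
        · exact Or.inr (Or.inr ⟨Reachable.refl _, h2⟩)
    · have hxz : (T.deleteEdges {s(a, b)}).Reachable x z := by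
        refine Adj.reachable ?_
        rw [SimpleGraph.deleteEdges_adj]
        exact ⟨h, by simpa using hef⟩
      rcases ih with h1 | ⟨h1, h2⟩ | ⟨h1, h2⟩
      · exact Or.inl (hxz.trans h1)
      · exact Or.inr (Or.inl ⟨hxz.trans h1, h2⟩)
      · exact Or.inr (Or.inr ⟨hxz.trans h1, h2⟩)

/-- Orientation of the deleted tree edge: one endpoint in `Ue`, the other in `De`. -/
lemma exists_orientation (hT : T.IsTree) (he : e ∈ T.edgeSet) :
    ∃ a b : V, e = s(a, b) ∧ a ∈ Ue T root e ∧ b ∈ De T root e := by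
  induction e with
  | _ a0 b0 =>
    have hadj : T.Adj a0 b0 := T.mem_edgeSet.mp he
    have hbridge : T.IsBridge s(a0, b0) :=
      (isAcyclic_iff_forall_edge_isBridge.mp hT.IsAcyclic) he
    have hnr : ¬ (T.deleteEdges {s(a0, b0)}).Reachable a0 b0 := by
      have := (isBridge_iff.mp hbridge)
      simpa [SimpleGraph.deleteEdges] using this
    have hr : T.Reachable root a0 := hT.isConnected root a0
    obtain ⟨p⟩ := hr
    have hd := reach_decomp (a := a0) (b := b0) p
    have key : (T.deleteEdges {s(a0, b0)}).Reachable root a0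
        ∨ (T.deleteEdges {s(a0, b0)}).Reachable root b0 := by
      rcases hd with h1 | ⟨h1, h2⟩ | ⟨h1, h2⟩
      · exact Or.inl h1
      · exact Or.inl h1
      · exact Or.inr h1
    rcases key with hk | hk
    · refine ⟨a0, b0, rfl, hk, ?_⟩
      intro hrb
      exact hnr (hk.symm.trans hrb)
    · refine ⟨b0, a0, Sym2.eq_swap.symm, hk, ?_⟩
      intro hra
      have : (T.deleteEdges {s(a0, b0)}).Reachable a0 b0 := hra.symm.trans hk
      exact hnr this

lemma De_reach (hT : T.IsTree) (he : e ∈ T.edgeSet) {x y : V}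
    (hx : x ∈ De T root e) (hy : y ∈ De T root e) :
    (T.deleteEdges {e}).Reachable x y := by
  obtain ⟨a, b, rfl, ha, hb⟩ := exists_orientation (root := root) hT he
  have hreach : ∀ z : V, z ∈ De T root s(a, b) → (T.deleteEdges {s(a, b)}).Reachable b z := by
    intro z hz
    obtain ⟨p⟩ := hT.isConnected b z
    rcases reach_decomp (a := a) (b := b) p with h1 | ⟨h1, h2⟩ | ⟨h1, h2⟩
    · exact h1
    · exact h2
    · exact absurd (ha.trans h2) hz
  exact (hreach x hx).symm.trans (hreach y hy)

lemma Ue_De_not_reach {x y : V} (hx : x ∈ Ue T root e) (hy : y ∈ De T root e) :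
    ¬ (T.deleteEdges {e}).Reachable x y := fun h => hy (hx.trans h)

lemma support_mem_Ue {x y : V} (p : (T.deleteEdges {e}).Walk x y) (hx : x ∈ Ue T root e) :
    ∀ z ∈ p.support, z ∈ Ue T root e := by
  intro z hz
  exact hx.trans ⟨p.takeUntil z hz⟩

lemma support_mem_De (hT : T.IsTree) (he : e ∈ T.edgeSet) {x y : V}
    (p : (T.deleteEdges {e}).Walk x y) (hx : x ∈ De T root e) :
    ∀ z ∈ p.support, z ∈ De T root e := by
  intro z hz
  rcases mem_Ue_or_De T root e z with hzU | hzD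
  · have hzx : (T.deleteEdges {e}).Reachable z x := ⟨(p.takeUntil z hz).reverse⟩
    exact ((Ue_De_not_reach hzU hx) hzx).elim
  · exact hzD

/-- The generic cut-decomposition of a walk relative to an edge `s(v,u)`. -/
lemma cut_decomp {H : SimpleGraph V} (hw0 : ∀ a ∈ H.edgeSet, 0 ≤ w a)
    {v u x y : V} (p : H.Walk x y) :
    (∃ q : (H.deleteEdges {s(v, u)}).Walk x y, pathWeight w q ≤ pathWeight w p)
    ∨ (∃ (q1 : (H.deleteEdges {s(v, u)}).Walk x v) (q2 : (H.deleteEdges {s(v, u)}).Walk u y),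
        pathWeight w q1 + w s(v, u) + pathWeight w q2 ≤ pathWeight w p)
    ∨ (∃ (q1 : (H.deleteEdges {s(v, u)}).Walk x u) (q2 : (H.deleteEdges {s(v, u)}).Walk v y),
        pathWeight w q1 + w s(v, u) + pathWeight w q2 ≤ pathWeight w p) := by
  have hw0' : ∀ a ∈ (H.deleteEdges {s(v, u)}).edgeSet, 0 ≤ w a := by
    intro a ha
    exact hw0 a (SimpleGraph.edgeSet_mono (SimpleGraph.deleteEdges_le _) ha)
  induction p with
  | nil => exact Or.inl ⟨Walk.nil, le_refl _⟩
  | @cons x z y h p ih =>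
    by_cases hef : s(x, z) = s(v, u)
    · have hwf : 0 ≤ w s(v, u) := hw0 _ (hef ▸ H.mem_edgeSet.mpr h)
      have hwz : w s(x, z) = w s(v, u) := by rw [hef]
      rw [Sym2.eq_iff] at hef
      rcases hef with ⟨rfl, rfl⟩ | ⟨rfl, rfl⟩
      · -- x = v, z = u
        rcases ih with ⟨q, hq⟩ | ⟨q1, q2, hq⟩ | ⟨q1, q2, hq⟩
        · refine Or.inr (Or.inl ⟨Walk.nil, q, ?_⟩)
          rw [pathWeight_cons, pathWeight_nil]
          linarith
        · refine Or.inr (Or.inl ⟨Walk.nil, q2, ?_⟩)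
          have := pathWeight_nonneg hw0' q1
          rw [pathWeight_cons, pathWeight_nil]
          linarith
        · refine Or.inl ⟨q2, ?_⟩
          have := pathWeight_nonneg hw0' q1
          rw [pathWeight_cons]
          linarith
      · -- x = u, z = v
        rcases ih with ⟨q, hq⟩ | ⟨q1, q2, hq⟩ | ⟨q1, q2, hq⟩
        · refine Or.inr (Or.inr ⟨Walk.nil, q, ?_⟩)
          rw [pathWeight_cons, pathWeight_nil, ← hwz]
          linarith
        · refine Or.inl ⟨q2, ?_⟩
          have := pathWeight_nonneg hw0' q1
          rw [pathWeight_cons]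
          linarith
        · refine Or.inr (Or.inr ⟨Walk.nil, q2, ?_⟩)
          have := pathWeight_nonneg hw0' q1
          rw [pathWeight_cons, pathWeight_nil, ← hwz]
          linarith
    · have hxz : (H.deleteEdges {s(v, u)}).Adj x z := by
        rw [SimpleGraph.deleteEdges_adj]
        exact ⟨h, by simpa using hef⟩
      have hwz : 0 ≤ w s(x, z) := hw0 _ (H.mem_edgeSet.mpr h)
      rcases ih with ⟨q, hq⟩ | ⟨q1, q2, hq⟩ | ⟨q1, q2, hq⟩
      · refine Or.inl ⟨Walk.cons hxz q, ?_⟩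
        rw [pathWeight_cons, pathWeight_cons]
        linarith
      · refine Or.inr (Or.inl ⟨Walk.cons hxz q1, q2, ?_⟩)
        rw [pathWeight_cons, pathWeight_cons]
        linarith
      · refine Or.inr (Or.inr ⟨Walk.cons hxz q1, q2, ?_⟩)
        rw [pathWeight_cons, pathWeight_cons]
        linarith

end Graphs

section SwapTree
variable {w : Sym2 V → ℝ} {G T : SimpleGraph V} {root : V} {e : Sym2 V} {v u0 : V}

lemma swapTree_edgeSet (he : e ∈ T.edgeSet) (hvu : v ≠ u0) :
    (swapTree T e s(v, u0)).edgeSet = (T.edgeSet \ {e}) ∪ {s(v, u0)} := by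
  rw [swapTree, edgeSet_fromEdgeSet]
  ext a
  simp only [Set.mem_diff, Set.mem_union, Set.mem_setOf_eq, Set.mem_singleton_iff]
  constructor
  · rintro ⟨h1, -⟩; exact h1
  · rintro (⟨haT, hne⟩ | rfl)
    · exact ⟨Or.inl ⟨haT, hne⟩, SimpleGraph.not_isDiag_of_mem_edgeSet T haT⟩
    · exact ⟨Or.inr rfl, fun hd => hvu (Sym2.mk_isDiag_iff.mp hd)⟩

lemma vswap_ne (hu0 : VSwap G T root e v u0) : v ≠ u0 := by
  rintro rfl
  exact hu0.2.2.2 hu0.2.2.1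

lemma swapTree_le_G (hTG : T ≤ G) (he : e ∈ T.edgeSet) (hu0 : VSwap G T root e v u0) :
    swapTree T e s(v, u0) ≤ G := by
  rw [← SimpleGraph.edgeSet_subset_edgeSet, swapTree_edgeSet he (vswap_ne hu0)]
  rintro a (⟨haT, -⟩ | ha')
  · exact SimpleGraph.edgeSet_mono hTG haT
  · rw [Set.mem_singleton_iff] at ha'
    subst ha'
    exact G.mem_edgeSet.mpr hu0.1

lemma deleteEdges_le_swapTree (he : e ∈ T.edgeSet) (hu0 : VSwap G T root e v u0) :
    T.deleteEdges {e} ≤ swapTree T e s(v, u0) := by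
  rw [← SimpleGraph.edgeSet_subset_edgeSet, swapTree_edgeSet he (vswap_ne hu0),
    SimpleGraph.edgeSet_deleteEdges]
  exact Set.subset_union_left

lemma swapTree_adj (he : e ∈ T.edgeSet) (hu0 : VSwap G T root e v u0) :
    (swapTree T e s(v, u0)).Adj v u0 := by
  rw [← SimpleGraph.mem_edgeSet, swapTree_edgeSet he (vswap_ne hu0)]
  exact Or.inr rfl

lemma swapTree_del_edgeSet_subset (he : e ∈ T.edgeSet) (hu0 : VSwap G T root e v u0) :
    ((swapTree T e s(v, u0)).deleteEdges {s(v, u0)}).edgeSet ⊆ (T.deleteEdges {e}).edgeSet := by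
  rw [SimpleGraph.edgeSet_deleteEdges, swapTree_edgeSet he (vswap_ne hu0),
    SimpleGraph.edgeSet_deleteEdges]
  rintro a ⟨(⟨h1, h2⟩ | h1), h3⟩
  · exact ⟨h1, h2⟩
  · exact absurd h1 h3

lemma swapTree_connected (hT : T.IsTree) (he : e ∈ T.edgeSet) (hu0 : VSwap G T root e v u0) :
    (swapTree T e s(v, u0)).Connected := by
  have hle := deleteEdges_le_swapTree he hu0
  have hroot : ∀ x : V, (swapTree T e s(v, u0)).Reachable root x := by
    intro x
    rcases mem_Ue_or_De T root e x with hx | hx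
    · exact (hx : (T.deleteEdges {e}).Reachable root x).mono hle
    · have h1 : (swapTree T e s(v, u0)).Reachable root v := (hu0.2.2.1).mono hle
      have h2 : (swapTree T e s(v, u0)).Reachable v u0 := (swapTree_adj he hu0).reachable
      have h3 : (swapTree T e s(v, u0)).Reachable u0 x :=
        (De_reach hT he hu0.2.2.2 hx).mono hle
      exact (h1.trans h2).trans h3
  rw [SimpleGraph.connected_iff]
  exact ⟨fun x y => ((hroot x).symm.trans (hroot y)), ⟨root⟩⟩

variable (hw : ∀ a ∈ G.edgeSet, 0 < w a) (hTG : T ≤ G) (hT : T.IsTree)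
  (he : e ∈ T.edgeSet) (hu0 : VSwap G T root e v u0)

include hw hTG hT he hu0

lemma hw0T : ∀ a ∈ T.edgeSet, 0 ≤ w a := by
  intro a ha; exact (hw a (SimpleGraph.edgeSet_mono hTG ha)).le

lemma hw0T' : ∀ a ∈ (swapTree T e s(v, u0)).edgeSet, 0 ≤ w a := by
  intro a ha; exact (hw a (SimpleGraph.edgeSet_mono (swapTree_le_G hTG he hu0) ha)).le

/-- same-side (both in `Ue`) upper bound -/
lemma dT'_same_ub_U {x y : V} (hx : x ∈ Ue T root e) (hy : y ∈ Ue T root e) :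
    wDist (swapTree T e s(v, u0)) w x y ≤ wDist T w x y := by
  obtain ⟨q0⟩ := Ue_reach hx hy
  set q := q0.bypass with hqdef
  have hq : q.IsPath := q0.bypass_isPath
  have hqT : wDist T w x y = pathWeight w q := by
    have hsub : ∀ a ∈ q.edges, a ∈ T.edgeSet := fun a ha =>
      SimpleGraph.edgeSet_mono (SimpleGraph.deleteEdges_le _) (q.edges_subset_edgeSet ha)
    rw [wDist_eq_of_isTree hT (q.transfer T hsub) (hq.transfer hsub), pathWeight_transfer]
  rw [hqT]
  have hsub' : ∀ a ∈ q.edges, a ∈ (swapTree T e s(v, u0)).edgeSet := fun a ha =>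
    SimpleGraph.edgeSet_mono (deleteEdges_le_swapTree he hu0) (q.edges_subset_edgeSet ha)
  calc wDist (swapTree T e s(v, u0)) w x y
      ≤ pathWeight w (q.transfer _ hsub') :=
        wDist_le_pathWeight_isPath (hw0T' hw hTG hT he hu0) _ (hq.transfer hsub')
  _ = pathWeight w q := pathWeight_transfer _ _

lemma dT'_same_ub_D {x y : V} (hx : x ∈ De T root e) (hy : y ∈ De T root e) :
    wDist (swapTree T e s(v, u0)) w x y ≤ wDist T w x y := by
  obtain ⟨q0⟩ := De_reach hT he hx hy
  set q := q0.bypass with hqdef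
  have hq : q.IsPath := q0.bypass_isPath
  have hqT : wDist T w x y = pathWeight w q := by
    have hsub : ∀ a ∈ q.edges, a ∈ T.edgeSet := fun a ha =>
      SimpleGraph.edgeSet_mono (SimpleGraph.deleteEdges_le _) (q.edges_subset_edgeSet ha)
    rw [wDist_eq_of_isTree hT (q.transfer T hsub) (hq.transfer hsub), pathWeight_transfer]
  rw [hqT]
  have hsub' : ∀ a ∈ q.edges, a ∈ (swapTree T e s(v, u0)).edgeSet := fun a ha =>
    SimpleGraph.edgeSet_mono (deleteEdges_le_swapTree he hu0) (q.edges_subset_edgeSet ha)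
  calc wDist (swapTree T e s(v, u0)) w x y
      ≤ pathWeight w (q.transfer _ hsub') :=
        wDist_le_pathWeight_isPath (hw0T' hw hTG hT he hu0) _ (hq.transfer hsub')
  _ = pathWeight w q := pathWeight_transfer _ _

end SwapTree

section SwapTree2
variable {w : Sym2 V → ℝ} {G T : SimpleGraph V} {root : V} {e : Sym2 V} {v u0 : V}
variable (hw : ∀ a ∈ G.edgeSet, 0 < w a) (hTG : T ≤ G) (hT : T.IsTree)
  (he : e ∈ T.edgeSet) (hu0 : VSwap G T root e v u0)

include hw hTG hT he hu0

lemma dT'_cross_ub {x y : V} (hx : x ∈ Ue T root e) (hy : y ∈ De T root e) :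
    wDist (swapTree T e s(v, u0)) w x y ≤ wDist T w x v + w s(v, u0) + wDist T w u0 y := by
  obtain ⟨p0⟩ := Ue_reach hx hu0.2.2.1
  obtain ⟨q0⟩ := De_reach hT he hu0.2.2.2 hy
  set p1 := p0.bypass with hp1def
  set p2 := q0.bypass with hp2def
  have hp1 : p1.IsPath := p0.bypass_isPath
  have hp2 : p2.IsPath := q0.bypass_isPath
  have hsupp1 : ∀ z ∈ p1.support, z ∈ Ue T root e := support_mem_Ue p1 hx
  have hsupp2 : ∀ z ∈ p2.support, z ∈ De T root e := support_mem_De hT he p2 hu0.2.2.2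
  have hsub1 : ∀ a ∈ p1.edges, a ∈ (swapTree T e s(v, u0)).edgeSet := fun a ha =>
    SimpleGraph.edgeSet_mono (deleteEdges_le_swapTree he hu0) (p1.edges_subset_edgeSet ha)
  have hsub2 : ∀ a ∈ p2.edges, a ∈ (swapTree T e s(v, u0)).edgeSet := fun a ha =>
    SimpleGraph.edgeSet_mono (deleteEdges_le_swapTree he hu0) (p2.edges_subset_edgeSet ha)
  set p1' := p1.transfer _ hsub1
  set p2' := p2.transfer _ hsub2
  set q : (swapTree T e s(v, u0)).Walk x y :=
    p1'.append (Walk.cons (swapTree_adj he hu0) p2') with hqdef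
  have hq : q.IsPath := by
    rw [Walk.isPath_def, hqdef, Walk.support_append, Walk.support_cons, List.tail_cons]
    apply List.Nodup.append
    · rw [Walk.support_transfer]; exact hp1.support_nodup
    · rw [Walk.support_transfer]; exact hp2.support_nodup
    · intro z hz1 hz2
      rw [Walk.support_transfer] at hz1 hz2
      exact (hsupp2 z hz2) ((hsupp1 z hz1))
  have hqw : pathWeight w q = pathWeight w p1 + w s(v, u0) + pathWeight w p2 := by
    rw [hqdef, pathWeight_append, pathWeight_cons, pathWeight_transfer, pathWeight_transfer]
    ring
  have h1 : wDist T w x v = pathWeight w p1 := by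
    have hsub : ∀ a ∈ p1.edges, a ∈ T.edgeSet := fun a ha =>
      SimpleGraph.edgeSet_mono (SimpleGraph.deleteEdges_le _) (p1.edges_subset_edgeSet ha)
    rw [wDist_eq_of_isTree hT (p1.transfer T hsub) (hp1.transfer hsub), pathWeight_transfer]
  have h2 : wDist T w u0 y = pathWeight w p2 := by
    have hsub : ∀ a ∈ p2.edges, a ∈ T.edgeSet := fun a ha =>
      SimpleGraph.edgeSet_mono (SimpleGraph.deleteEdges_le _) (p2.edges_subset_edgeSet ha)
    rw [wDist_eq_of_isTree hT (p2.transfer T hsub) (hp2.transfer hsub), pathWeight_transfer]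
  calc wDist (swapTree T e s(v, u0)) w x y ≤ pathWeight w q :=
        wDist_le_pathWeight_isPath (hw0T' hw hTG hT he hu0) q hq
  _ = _ := by rw [hqw, h1, h2]

lemma wDistT_le_del_walk {c d : V}
    (q : ((swapTree T e s(v, u0)).deleteEdges {s(v, u0)}).Walk c d) :
    wDist T w c d ≤ pathWeight w q := by
  have hsub : ∀ a ∈ q.edges, a ∈ T.edgeSet := fun a ha =>
    SimpleGraph.edgeSet_mono (SimpleGraph.deleteEdges_le _)
      (swapTree_del_edgeSet_subset he hu0 (q.edges_subset_edgeSet ha))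
  calc wDist T w c d ≤ pathWeight w (q.transfer T hsub) :=
        wDist_le_pathWeight (hw0T hw hTG hT he hu0) _
  _ = pathWeight w q := pathWeight_transfer _ _

lemma del_reach {c d : V}
    (q : ((swapTree T e s(v, u0)).deleteEdges {s(v, u0)}).Walk c d) :
    (T.deleteEdges {e}).Reachable c d :=
  ⟨q.transfer _ (fun a ha => swapTree_del_edgeSet_subset he hu0 (q.edges_subset_edgeSet ha))⟩

lemma wDist_set_nonempty_T' (x y : V) :
    {r | ∃ p : (swapTree T e s(v, u0)).Walk x y, p.IsPath ∧ r = pathWeight w p}.Nonempty := by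
  obtain ⟨q⟩ := (swapTree_connected hT he hu0) x y
  exact ⟨_, ⟨q.bypass, q.bypass_isPath, rfl⟩⟩

lemma dT'_cross_lb {x y : V} (hx : x ∈ Ue T root e) (hy : y ∈ De T root e) :
    wDist T w x v + w s(v, u0) + wDist T w u0 y ≤ wDist (swapTree T e s(v, u0)) w x y := by
  apply le_csInf (wDist_set_nonempty_T' hw hTG hT he hu0 x y)
  rintro r ⟨p, hp, rfl⟩
  rcases cut_decomp (hw0T' hw hTG hT he hu0) p with ⟨q, hq⟩ | ⟨q1, q2, hq⟩ | ⟨q1, q2, hq⟩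
  · exact absurd (del_reach hw hTG hT he hu0 q) (Ue_De_not_reach hx hy)
  · have h1 := wDistT_le_del_walk hw hTG hT he hu0 q1
    have h2 := wDistT_le_del_walk hw hTG hT he hu0 q2
    linarith
  · exact absurd (del_reach hw hTG hT he hu0 q1) (Ue_De_not_reach hx hu0.2.2.2)

lemma dT'_same_lb_U {x y : V} (hx : x ∈ Ue T root e) (hy : y ∈ Ue T root e) :
    wDist T w x y ≤ wDist (swapTree T e s(v, u0)) w x y := by
  apply le_csInf (wDist_set_nonempty_T' hw hTG hT he hu0 x y)
  rintro r ⟨p, hp, rfl⟩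
  rcases cut_decomp (hw0T' hw hTG hT he hu0) p with ⟨q, hq⟩ | ⟨q1, q2, hq⟩ | ⟨q1, q2, hq⟩
  · exact (wDistT_le_del_walk hw hTG hT he hu0 q).trans hq
  · exact absurd ((del_reach hw hTG hT he hu0 q2).symm) (Ue_De_not_reach hy hu0.2.2.2)
  · exact absurd (del_reach hw hTG hT he hu0 q1) (Ue_De_not_reach hx hu0.2.2.2)

lemma dT'_same_lb_D {x y : V} (hx : x ∈ De T root e) (hy : y ∈ De T root e) :
    wDist T w x y ≤ wDist (swapTree T e s(v, u0)) w x y := by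
  apply le_csInf (wDist_set_nonempty_T' hw hTG hT he hu0 x y)
  rintro r ⟨p, hp, rfl⟩
  rcases cut_decomp (hw0T' hw hTG hT he hu0) p with ⟨q, hq⟩ | ⟨q1, q2, hq⟩ | ⟨q1, q2, hq⟩
  · exact (wDistT_le_del_walk hw hTG hT he hu0 q).trans hq
  · exact absurd ((del_reach hw hTG hT he hu0 q1).symm) (Ue_De_not_reach hu0.2.2.1 hx)
  · exact absurd (del_reach hw hTG hT he hu0 q2) (Ue_De_not_reach hu0.2.2.1 hy)

end SwapTree2

section MainBounds
variable {w : Sym2 V → ℝ} {G T : SimpleGraph V} {root : V} {e : Sym2 V} {v u0 : V}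

lemma pair_set_finite {P : V → V → Prop} {F : V → V → ℝ} :
    {r | ∃ x y, P x y ∧ r = F x y}.Finite :=
  Set.Finite.subset (Set.finite_range fun p : V × V => F p.1 p.2)
    (by rintro r ⟨x, y, -, rfl⟩; exact ⟨(x, y), rfl⟩)

noncomputable def Cval (G T : SimpleGraph V) (w : Sym2 V → ℝ) (root : V) (e : Sym2 V) : ℝ :=
  sSup {r | ∃ x y : V, (G.Adj x y ∧ s(x, y) ≠ e ∧
      ((x ∈ Ue T root e ∧ y ∈ Ue T root e) ∨ (x ∈ De T root e ∧ y ∈ De T root e))) ∧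
      r = wDist T w x y / w s(x, y)}

variable (hw : ∀ a ∈ G.edgeSet, 0 < w a) (h2ec : TwoEdgeConnected G)
  (hTG : T ≤ G) (hT : T.IsTree) (he : e ∈ T.edgeSet) (hu0 : VSwap G T root e v u0)

include hw h2ec hTG hT he hu0

lemma phi_nonneg (x y : V) (hxyG : G.Adj x y) : 0 ≤ phi T w v u0 x y := by
  have h1 := wDist_nonneg (hw0T hw hTG hT he hu0) x v
  have h2 := wDist_nonneg (hw0T hw hTG hT he hu0) u0 y
  have h3 := (hw _ (G.mem_edgeSet.mpr hu0.1)).le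
  have h4 := (hw _ (G.mem_edgeSet.mpr hxyG)).le
  exact div_nonneg (by linarith) h4

lemma phiMax_nonneg : 0 ≤ phiMax G T w root e v u0 := by
  have hmem : phi T w v u0 v u0 ∈
      {r | ∃ x y, VSwap G T root e x y ∧ r = phi T w v u0 x y} := ⟨v, u0, hu0, rfl⟩
  have hb : BddAbove {r | ∃ x y, VSwap G T root e x y ∧ r = phi T w v u0 x y} :=
    pair_set_finite.bddAbove
  exact (phi_nonneg hw h2ec hTG hT he hu0 v u0 hu0.1).trans (le_csSup hb hmem)

lemma edge_bound {c d : V} (hcd : (G.deleteEdges {e}).Adj c d) :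
    wDist (swapTree T e s(v, u0)) w c d
      ≤ max (Cval G T w root e) (phiMax G T w root e v u0) * w s(c, d) := by
  set K := max (Cval G T w root e) (phiMax G T w root e v u0) with hKdef
  rw [SimpleGraph.deleteEdges_adj] at hcd
  obtain ⟨hadj, hne⟩ := hcd
  rw [Set.mem_singleton_iff] at hne
  have hwg : 0 < w s(c, d) := hw _ (G.mem_edgeSet.mpr hadj)
  have cross : ∀ c' d', G.Adj c' d' → s(c', d') ≠ e → c' ∈ Ue T root e → d' ∈ De T root e →
      wDist (swapTree T e s(v, u0)) w c' d' ≤ K * w s(c', d') := by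
    intro c' d' hadj' hne' hcU hdD
    have hwg' : 0 < w s(c', d') := hw _ (G.mem_edgeSet.mpr hadj')
    have h1 := dT'_cross_ub hw hTG hT he hu0 hcU hdD
    have hphi : phi T w v u0 c' d' ≤ phiMax G T w root e v u0 :=
      le_csSup pair_set_finite.bddAbove ⟨c', d', ⟨hadj', hne', hcU, hdD⟩, rfl⟩
    have h2 : wDist T w c' v + w s(v, u0) + wDist T w u0 d'
        = phi T w v u0 c' d' * w s(c', d') := by
      rw [phi, div_mul_cancel₀ _ (ne_of_gt hwg')]
    calc wDist (swapTree T e s(v, u0)) w c' d'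
        ≤ phi T w v u0 c' d' * w s(c', d') := by rw [← h2]; exact h1
    _ ≤ K * w s(c', d') := by
        apply mul_le_mul_of_nonneg_right _ hwg'.le
        exact hphi.trans (le_max_right _ _)
  have same : ∀ c' d', G.Adj c' d' → s(c', d') ≠ e →
      ((c' ∈ Ue T root e ∧ d' ∈ Ue T root e) ∨ (c' ∈ De T root e ∧ d' ∈ De T root e)) →
      wDist (swapTree T e s(v, u0)) w c' d' ≤ K * w s(c', d') := by
    intro c' d' hadj' hne' hside
    have hwg' : 0 < w s(c', d') := hw _ (G.mem_edgeSet.mpr hadj')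
    have h1 : wDist (swapTree T e s(v, u0)) w c' d' ≤ wDist T w c' d' := by
      rcases hside with ⟨h1, h2⟩ | ⟨h1, h2⟩
      · exact dT'_same_ub_U hw hTG hT he hu0 h1 h2
      · exact dT'_same_ub_D hw hTG hT he hu0 h1 h2
    have hC : wDist T w c' d' / w s(c', d') ≤ Cval G T w root e :=
      le_csSup pair_set_finite.bddAbove ⟨c', d', ⟨hadj', hne', hside⟩, rfl⟩
    have h2 : wDist T w c' d' ≤ K * w s(c', d') := by
      rw [← div_le_iff₀ hwg']
      exact hC.trans (le_max_left _ _)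
    linarith
  rcases mem_Ue_or_De T root e c with hc | hc <;> rcases mem_Ue_or_De T root e d with hd | hd
  · exact same c d hadj hne (Or.inl ⟨hc, hd⟩)
  · exact cross c d hadj hne hc hd
  · rw [wDist_symm, show s(c, d) = s(d, c) from Sym2.eq_swap.symm]
    exact cross d c hadj.symm (by rwa [Sym2.eq_swap]) hd hc
  · exact same c d hadj hne (Or.inr ⟨hc, hd⟩)

lemma walk_bound {x y : V} (q : (G.deleteEdges {e}).Walk x y) :
    wDist (swapTree T e s(v, u0)) w x y
      ≤ max (Cval G T w root e) (phiMax G T w root e v u0) * pathWeight w q := by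
  induction q with
  | nil =>
    rw [pathWeight_nil, mul_zero]
    exact wDist_self_nonpos (hw0T' hw hTG hT he hu0) _
  | @cons x z y h q ih =>
    have htri : wDist (swapTree T e s(v, u0)) w x y
        ≤ wDist (swapTree T e s(v, u0)) w x z + wDist (swapTree T e s(v, u0)) w z y :=
      wDist_triangle (hw0T' hw hTG hT he hu0)
        ((swapTree_connected hT he hu0) x z) ((swapTree_connected hT he hu0) z y)
    have hedge := edge_bound hw h2ec hTG hT he hu0 h
    rw [pathWeight_cons, mul_add]
    linarith

lemma stretch_le_max :
    stretch (G.deleteEdges {e}) (swapTree T e s(v, u0)) w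
      ≤ max (Cval G T w root e) (phiMax G T w root e v u0) := by
  set K := max (Cval G T w root e) (phiMax G T w root e v u0) with hKdef
  have hK0 : 0 ≤ K := (phiMax_nonneg hw h2ec hTG hT he hu0).trans (le_max_right _ _)
  apply Real.sSup_le _ hK0
  rintro r ⟨x, y, hne, rfl⟩
  have heG : e ∈ G.edgeSet := SimpleGraph.edgeSet_mono hTG he
  have hconn := h2ec.2 e heG
  have hwHe : ∀ a ∈ (G.deleteEdges {e}).edgeSet, 0 < w a := fun a ha =>
    hw a (SimpleGraph.edgeSet_mono (SimpleGraph.deleteEdges_le _) ha)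
  obtain ⟨p, hp, hpw⟩ := exists_min_path (hconn x y)
  have hpos : 0 < wDist (G.deleteEdges {e}) w x y := wDist_pos hwHe (hconn x y) hne
  rw [div_le_iff₀ hpos, ← hpw]
  exact walk_bound hw h2ec hTG hT he hu0 p

lemma max_le_stretch :
    max (Cval G T w root e) (phiMax G T w root e v u0)
      ≤ stretch (G.deleteEdges {e}) (swapTree T e s(v, u0)) w := by
  have heG : e ∈ G.edgeSet := SimpleGraph.edgeSet_mono hTG he
  have hconn := h2ec.2 e heG
  have hwHe : ∀ a ∈ (G.deleteEdges {e}).edgeSet, 0 < w a := fun a ha =>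
    hw a (SimpleGraph.edgeSet_mono (SimpleGraph.deleteEdges_le _) ha)
  have hw0He : ∀ a ∈ (G.deleteEdges {e}).edgeSet, 0 ≤ w a := fun a ha => (hwHe a ha).le
  have hσb : BddAbove {r | ∃ x y : V, x ≠ y ∧
      r = wDist (swapTree T e s(v, u0)) w x y / wDist (G.deleteEdges {e}) w x y} :=
    pair_set_finite.bddAbove
  have hσ0 : 0 ≤ stretch (G.deleteEdges {e}) (swapTree T e s(v, u0)) w := by
    have hmem : wDist (swapTree T e s(v, u0)) w v u0 / wDist (G.deleteEdges {e}) w v u0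
        ∈ {r | ∃ x y : V, x ≠ y ∧
        r = wDist (swapTree T e s(v, u0)) w x y / wDist (G.deleteEdges {e}) w x y} :=
      ⟨v, u0, vswap_ne hu0, rfl⟩
    refine le_trans ?_ (le_csSup hσb hmem)
    exact div_nonneg (wDist_nonneg (hw0T' hw hTG hT he hu0) _ _) (wDist_nonneg hw0He _ _)
  have key : ∀ (x y : V), x ≠ y → s(x, y) ≠ e → G.Adj x y → ∀ N : ℝ, 0 ≤ N →
      N ≤ wDist (swapTree T e s(v, u0)) w x y →
      N / w s(x, y) ≤ stretch (G.deleteEdges {e}) (swapTree T e s(v, u0)) w := by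
    intro x y hne hnee hadj N hN0 hNle
    have hHeadj : (G.deleteEdges {e}).Adj x y := by
      rw [SimpleGraph.deleteEdges_adj]
      exact ⟨hadj, by simpa using hnee⟩
    have hle : wDist (G.deleteEdges {e}) w x y ≤ w s(x, y) := wDist_le_weight hw0He hHeadj
    have hpos : 0 < wDist (G.deleteEdges {e}) w x y := wDist_pos hwHe hHeadj.reachable hne
    have hdiv : N / w s(x, y) ≤
        wDist (swapTree T e s(v, u0)) w x y / wDist (G.deleteEdges {e}) w x y := by
      gcongr
      exact hN0.trans hNle
    exact hdiv.trans (le_csSup hσb ⟨x, y, hne, rfl⟩)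
  apply max_le
  · apply Real.sSup_le _ hσ0
    rintro r ⟨x, y, ⟨hadj, hnee, hside⟩, rfl⟩
    have hlb : wDist T w x y ≤ wDist (swapTree T e s(v, u0)) w x y := by
      rcases hside with ⟨h1, h2⟩ | ⟨h1, h2⟩
      · exact dT'_same_lb_U hw hTG hT he hu0 h1 h2
      · exact dT'_same_lb_D hw hTG hT he hu0 h1 h2
    exact key x y hadj.ne hnee hadj _ (wDist_nonneg (hw0T hw hTG hT he hu0) x y) hlb
  · apply Real.sSup_le _ hσ0
    rintro r ⟨x, y, hsw, rfl⟩
    have hne : x ≠ y := by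
      rintro rfl
      exact hsw.2.2.2 hsw.2.2.1
    have hN0 : 0 ≤ wDist T w x v + w s(v, u0) + wDist T w u0 y := by
      have h1 := wDist_nonneg (hw0T hw hTG hT he hu0) x v
      have h2 := wDist_nonneg (hw0T hw hTG hT he hu0) u0 y
      have h3 := (hw _ (G.mem_edgeSet.mpr hu0.1)).le
      linarith
    exact key x y hne hsw.2.1 hsw.1 _ hN0
      (dT'_cross_lb hw hTG hT he hu0 hsw.2.2.1 hsw.2.2.2)

end MainBounds


/-- every `v`-best cut edge for `e` is a `v`-best swap edge for `e`. -/
theorem stmt_0 (G T : SimpleGraph V) (w : Sym2 V → ℝ) (root : V)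
    (hw : ∀ a ∈ G.edgeSet, 0 < w a)
    (h2ec : TwoEdgeConnected G)
    (hTG : T ≤ G) (hT : T.IsTree)
    (e : Sym2 V) (he : e ∈ T.edgeSet)
    (v : V) (hv : v ∈ Ue T root e)
    -- `f = (v, u) ∈ S(e, v)`; in particular `S(e, v) ≠ ∅`
    (u : V) (hu : VSwap G T root e v u)
    -- `f` minimizes `φ_e(f') = max_{g ∈ S(e)} φ(f', g)` among all edges of `S(e, v)`
    (hmin : ∀ u', VSwap G T root e v u' →
      phiMax G T w root e v u ≤ phiMax G T w root e v u') :
    -- then `f` minimizes `σ_{G-e}(T_{e/f'})` among all edges of `S(e, v)`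
    ∀ u', VSwap G T root e v u' →
      stretch (G.deleteEdges {e}) (swapTree T e (s(v, u))) w ≤
        stretch (G.deleteEdges {e}) (swapTree T e (s(v, u'))) w := by
  intro u' hu'
  calc stretch (G.deleteEdges {e}) (swapTree T e s(v, u)) w
      ≤ max (Cval G T w root e) (phiMax G T w root e v u) :=
        stretch_le_max hw h2ec hTG hT he hu
  _ ≤ max (Cval G T w root e) (phiMax G T w root e v u') :=
        max_le_max le_rfl (hmin u' hu')
  _ ≤ _ := max_le_stretch hw h2ec hTG hT he hu'
end

section
/- Let e ∈ E(T) and v ∈ U_e. Let T̂ be a subtree of T such that V(T̂) ⊆ D_e, and let c ∈ V(T̂). Let f = (v, u) ∈ S(e, v) be a swap edge for e that minimizes w(f') + d_T(u', c) over all edges f' = (v, u') ∈ S(e, v), and let g = (x, y) be a critical edge for f. Assume that S(e, v, V(T̂)) contains a v-best cut edge for e. If f is not a v-best cut edge for e, then S(e, v, V(T')) contains a v-best cut edge for e, where T' is the (c, y)-tree of T̂. -/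
open SimpleGraph

variable {V : Type*} [Fintype V] [DecidableEq V]

/-- `x` and `y` are joined by a walk of `T` whose support stays inside `A`
(i.e. they are in the same connected component of the subgraph induced by `A`). -/
def ReachIn (T : SimpleGraph V) (A : Set V) (x y : V) : Prop :=
  ∃ p : T.Walk x y, ∀ z ∈ p.support, z ∈ A

/-- The connected component of `v` in the subgraph of `T` induced by `A`. -/
def compIn (T : SimpleGraph V) (A : Set V) (v : V) : Set V :=
  {u | ReachIn T A v u}

/-- `A` induces a connected (possibly empty) subgraph of `T`, i.e. a subtree of `T`. -/
def IsSubtreeOn (T : SimpleGraph V) (A : Set V) : Prop :=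
  ∀ a ∈ A, ∀ b ∈ A, ReachIn T A a b

/-- `C` is a connected component of the subgraph of `T` induced by `A`. -/
def IsCompOf (T : SimpleGraph V) (A C : Set V) : Prop :=
  ∃ v ∈ A, C = compIn T A v


section Aux

private lemma sum_toFinset_le' {α : Type*} [DecidableEq α] (f : α → ℝ) :
    ∀ (l : List α), (∀ a ∈ l, 0 ≤ f a) → ∑ a ∈ l.toFinset, f a ≤ (l.map f).sum := by
  intro l
  induction l with
  | nil => simp
  | cons a l ih =>
    intro h
    have h' : ∀ b ∈ l, 0 ≤ f b := fun b hb => h b (List.mem_cons_of_mem a hb)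
    have ha0 : 0 ≤ f a := h a List.mem_cons_self
    simp only [List.toFinset_cons, List.map_cons, List.sum_cons]
    by_cases hmem : a ∈ l.toFinset
    · rw [Finset.insert_eq_self.2 hmem]
      have := ih h'
      linarith
    · rw [Finset.sum_insert hmem]
      have := ih h'
      linarith

private lemma list_sum_map_le {α : Type*} [DecidableEq α] (f : α → ℝ) (l₁ l₂ : List α)
    (h₁ : l₁.Nodup) (hsub : l₁ ⊆ l₂) (hf : ∀ a ∈ l₂, 0 ≤ f a) :
    (l₁.map f).sum ≤ (l₂.map f).sum := by
  have e1 : (l₁.map f).sum = ∑ a ∈ l₁.toFinset, f a := (List.sum_toFinset f h₁).symm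
  have e2 : ∑ a ∈ l₁.toFinset, f a ≤ ∑ a ∈ l₂.toFinset, f a := by
    apply Finset.sum_le_sum_of_subset_of_nonneg
    · intro a ha
      rw [List.mem_toFinset] at ha ⊢
      exact hsub ha
    · intro a ha _
      exact hf a (List.mem_toFinset.1 ha)
  have e3 := sum_toFinset_le' f l₂ hf
  linarith

private lemma pathWeight_append_s1 {T : SimpleGraph V} (w : Sym2 V → ℝ) {a b c : V}
    (p : T.Walk a b) (q : T.Walk b c) :
    pathWeight w (p.append q) = pathWeight w p + pathWeight w q := by
  simp [pathWeight, Walk.edges_append]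

private lemma pathWeight_reverse_s1 {T : SimpleGraph V} (w : Sym2 V → ℝ) {a b : V}
    (p : T.Walk a b) : pathWeight w p.reverse = pathWeight w p := by
  simp [pathWeight, Walk.edges_reverse, List.map_reverse, List.sum_reverse]

private lemma wDist_eq_of_isPath {T : SimpleGraph V} (hT : T.IsTree) (w : Sym2 V → ℝ)
    {a b : V} (p : T.Walk a b) (hp : p.IsPath) : wDist T w a b = pathWeight w p := by
  have hu := hT.existsUnique_path a b
  have hset : {r | ∃ q : T.Walk a b, q.IsPath ∧ r = pathWeight w q} = {pathWeight w p} := by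
    ext r
    simp only [Set.mem_setOf_eq, Set.mem_singleton_iff]
    constructor
    · rintro ⟨q, hq, rfl⟩
      rw [hu.unique hq hp]
    · rintro rfl
      exact ⟨p, hp, rfl⟩
  rw [wDist, hset, csInf_singleton]

private lemma pathWeight_bypass_le_s1 {T : SimpleGraph V} (w : Sym2 V → ℝ)
    (hw : ∀ a ∈ T.edgeSet, 0 ≤ w a) {a b : V} (p : T.Walk a b) :
    pathWeight w p.bypass ≤ pathWeight w p := by
  apply list_sum_map_le
  · exact (p.bypass_isPath).isTrail.edges_nodup
  · exact p.edges_bypass_subset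
  · exact fun x hx => hw x (p.edges_subset_edgeSet hx)

private lemma wDist_triangle_s1 {T : SimpleGraph V} (hT : T.IsTree) (w : Sym2 V → ℝ)
    (hw : ∀ a ∈ T.edgeSet, 0 ≤ w a) (a b c : V) :
    wDist T w a c ≤ wDist T w a b + wDist T w b c := by
  obtain ⟨p1⟩ := hT.isConnected.preconnected a b
  obtain ⟨p2⟩ := hT.isConnected.preconnected b c
  have h1 := wDist_eq_of_isPath hT w p1.bypass p1.bypass_isPath
  have h2 := wDist_eq_of_isPath hT w p2.bypass p2.bypass_isPath
  set q : T.Walk a c := p1.bypass.append p2.bypass with hq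
  have h3 := wDist_eq_of_isPath hT w q.bypass q.bypass_isPath
  have h4 := pathWeight_bypass_le_s1 w hw q
  rw [hq, pathWeight_append_s1] at h4
  rw [h1, h2, h3]
  linarith

end Aux

/-- localizing a `v`-best cut edge (Lemma on the position of a BCE).
`A = V(T̂)` is the vertex set of a subtree `T̂` of `T` with `V(T̂) ⊆ D_e`, `c ∈ V(T̂)`;
`f = (v, u)` minimizes `w(f') + d_T(u', c)` over `f' = (v, u') ∈ S(e, v)`;
`g = (x, y)` is a critical edge for `f`; the walk `q.append r` is the unique path of
`T` from `y` to `c` and `z` is its first vertex belonging to `A`, so that the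
`(c, y)`-tree of `T̂` has vertex set `compIn T (A \ {c}) z` (empty when `z = c`). -/
theorem stmt_1 (G T : SimpleGraph V) (w : Sym2 V → ℝ) (root : V)
    (hw : ∀ a ∈ G.edgeSet, 0 < w a)
    (h2ec : TwoEdgeConnected G)
    (hTG : T ≤ G) (hT : T.IsTree)
    (e : Sym2 V) (he : e ∈ T.edgeSet)
    (v : V) (hv : v ∈ Ue T root e)
    (A : Set V) (hA : IsSubtreeOn T A) (hAD : A ⊆ De T root e)
    (c : V) (hcA : c ∈ A)
    -- `f = (v, u) ∈ S(e, v)` minimizes `w(f') + d_T(u', c)` over `f' = (v, u') ∈ S(e, v)`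
    (u : V) (hu : VSwap G T root e v u)
    (hfmin : ∀ u', VSwap G T root e v u' →
      w (s(v, u)) + wDist T w u c ≤ w (s(v, u')) + wDist T w u' c)
    -- `g = (x, y)` is a critical edge for `f`
    (x y : V) (hg : VSwap G T root e x y)
    (hcrit : ∀ x' y', VSwap G T root e x' y' → phi T w v u x' y' ≤ phi T w v u x y)
    -- `S(e, v, V(T̂))` contains a `v`-BCE for `e`
    (hBCEin : ∃ u₀, VSwap G T root e v u₀ ∧ u₀ ∈ A ∧
      ∀ u', VSwap G T root e v u' → phiMax G T w root e v u₀ ≤ phiMax G T w root e v u')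
    -- `f` is not a `v`-BCE for `e`
    (hnotBCE : ¬ (∀ u', VSwap G T root e v u' →
      phiMax G T w root e v u ≤ phiMax G T w root e v u'))
    -- `z` is the first vertex of the unique path of `T` from `y` to `c` belonging to `A`
    (z : V) (q : T.Walk y z) (r : T.Walk z c)
    (hqr : (q.append r).IsPath) (hzA : z ∈ A)
    (hfirst : ∀ a ∈ q.support, a ∈ A → a = z) :
    -- then `S(e, v, V(T'))` contains a `v`-BCE, `T'` being the `(c, y)`-tree of `T̂`
    ∃ u₀, VSwap G T root e v u₀ ∧ u₀ ∈ compIn T (A \ {c}) z ∧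
      ∀ u', VSwap G T root e v u' → phiMax G T w root e v u₀ ≤ phiMax G T w root e v u' := by
  classical
  obtain ⟨u₀, hsw₀, hu₀A, hbce⟩ := hBCEin
  by_cases hmem : u₀ ∈ compIn T (A \ {c}) z
  · exact ⟨u₀, hsw₀, hmem, hbce⟩
  -- otherwise we show `f` is itself a `v`-BCE, contradicting `hnotBCE`
  exfalso
  apply hnotBCE
  have hw0 : ∀ a ∈ T.edgeSet, 0 ≤ w a := fun a ha => (hw a (edgeSet_mono hTG ha)).le
  -- the tree path from `y` to `u₀` goes through `c`
  -- `s` : path from `z` to `u₀` inside `A`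
  obtain ⟨s0, hs0A⟩ := hA z hzA u₀ hu₀A
  set s : T.Walk z u₀ := s0.bypass with hs
  have hsP : s.IsPath := s0.bypass_isPath
  have hsA : ∀ a ∈ s.support, a ∈ A := fun a ha => hs0A a (s0.support_bypass_subset ha)
  have hcs : c ∈ s.support := by
    by_contra hcs
    exact hmem ⟨s, fun a ha => ⟨hsA a ha, fun h => hcs (Set.mem_singleton_iff.1 h ▸ ha)⟩⟩
  have hqP : q.IsPath := hqr.of_append_left
  have hrP : r.IsPath := hqr.of_append_right
  -- split `s` at `c`
  have hspec : (s.takeUntil c hcs).append (s.dropUntil c hcs) = s := s.take_spec hcs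
  have hs₁P : (s.takeUntil c hcs).IsPath := hsP.takeUntil hcs
  have hs₂P : (s.dropUntil c hcs).IsPath := hsP.dropUntil hcs
  -- by uniqueness of paths in a tree, `r = s.takeUntil c`
  have hreq : r = s.takeUntil c hcs := (hT.existsUnique_path z c).unique hrP hs₁P
  -- `q.append s` is a path from `y` to `u₀`
  have hWP : (q.append s).IsPath := by
    apply Walk.IsPath.mk'
    rw [Walk.support_append]
    rw [List.nodup_append]
    refine ⟨hqP.support_nodup, hsP.support_nodup.tail, ?_⟩
    intro a haq b has hab
    subst hab
    have haA : a ∈ A := hsA a (List.mem_of_mem_tail has)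
    have haz : a = z := hfirst a haq haA
    have : z ∉ s.support.tail := by
      have hnd := hsP.support_nodup
      rw [s.support_eq_cons] at hnd
      exact (List.nodup_cons.1 hnd).1
    exact this (haz ▸ has)
  -- distances
  have hd1 : wDist T w y u₀ = pathWeight w (q.append s) :=
    wDist_eq_of_isPath hT w _ hWP
  have hd2 : wDist T w y c = pathWeight w (q.append r) :=
    wDist_eq_of_isPath hT w _ hqr
  have hd3 : wDist T w c u₀ = pathWeight w (s.dropUntil c hcs) :=
    wDist_eq_of_isPath hT w _ hs₂P
  have hd1' : wDist T w u₀ y = wDist T w y u₀ := by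
    rw [wDist_eq_of_isPath hT w (q.append s).reverse hWP.reverse, pathWeight_reverse_s1, hd1]
  have hd3' : wDist T w u₀ c = wDist T w c u₀ := by
    rw [wDist_eq_of_isPath hT w (s.dropUntil c hcs).reverse hs₂P.reverse,
      pathWeight_reverse_s1, hd3]
  have hd2' : wDist T w c y = wDist T w y c := by
    rw [wDist_eq_of_isPath hT w (q.append r).reverse hqr.reverse, pathWeight_reverse_s1, hd2]
  have hsw : pathWeight w s = pathWeight w (s.takeUntil c hcs)
      + pathWeight w (s.dropUntil c hcs) := by
    conv_lhs => rw [← hspec]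
    rw [pathWeight_append_s1]
  -- key equality: d(u₀, y) = d(u₀, c) + d(c, y)
  have t3 : wDist T w u₀ y = wDist T w u₀ c + wDist T w c y := by
    rw [hd1', hd3', hd2', hd1, hd2, hd3, pathWeight_append_s1, pathWeight_append_s1, hsw, ← hreq]
    ring
  -- triangle inequality: d(u, y) ≤ d(u, c) + d(c, y)
  have t1 : wDist T w u y ≤ wDist T w u c + wDist T w c y :=
    wDist_triangle_s1 hT w hw0 u c y
  -- minimality of f
  have t2 : w (s(v, u)) + wDist T w u c ≤ w (s(v, u₀)) + wDist T w u₀ c := hfmin u₀ hsw₀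
  -- compare phi values
  have hwg : 0 < w (s(x, y)) := hw _ (G.mem_edgeSet.2 hg.1)
  have h2 : phi T w v u x y ≤ phi T w v u₀ x y := by
    unfold phi
    exact div_le_div_of_nonneg_right (by linarith) hwg.le
  -- bounded above
  have hbdd : ∀ u', BddAbove {ρ | ∃ x' y', VSwap G T root e x' y' ∧ ρ = phi T w v u' x' y'} := by
    intro u'
    apply Set.Finite.bddAbove
    apply Set.Finite.subset (Set.finite_range (fun p : V × V => phi T w v u' p.1 p.2))
    rintro ρ ⟨x', y', _, rfl⟩
    exact ⟨(x', y'), rfl⟩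
  intro u' hu'
  have h1 : phiMax G T w root e v u ≤ phi T w v u x y := by
    rw [phiMax]
    have hne : {ρ | ∃ x' y', VSwap G T root e x' y' ∧ ρ = phi T w v u x' y'}.Nonempty :=
      ⟨phi T w v u x y, ⟨x, y, hg, rfl⟩⟩
    apply csSup_le hne
    rintro ρ ⟨x', y', hxy', rfl⟩
    exact hcrit x' y' hxy'
  have h3 : phi T w v u₀ x y ≤ phiMax G T w root e v u₀ := by
    rw [phiMax]
    exact le_csSup (hbdd u₀) ⟨x, y, hg, rfl⟩
  exact ((h1.trans h2).trans h3).trans (hbce u' hu')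
end
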